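/- arXiv:2403.12324 — 3 statements merged into one kernel-verified Lean document; each statement's English description precedes it below -/
import Mathlib

section
/- Chain rule for pragmatic information: let I, I', M, M' be nonempty finite types. Let P be a strictly positive probability vector on I × I' × M × M' (joint law of outcomes and messages), and let Q be a strictly positive probability vector on I × I' (joint prior). Write φ(m,m') = Σ_{i,i'} P(i,i',m,m'), P(i,i'|m,m') = P(i,i',m,m')/φ(m,m'), P(i|m,m') = Σ_{i'} P(i,i'|m,m'), P(i'|i,m,m') = P(i,i'|m,m')/P(i|m,m'), Q₁(i) = Σ_{i'} Q(i,i'), and Q(i'|i) = Q(i,i')/Q₁(i). Then the joint pragmatic information Σ_{i,i',m,m'} P(i,i',m,m') * log₂(P(i,i'|m,m')/Q(i,i')) equals Σ_{i,i',m,m'} P(i,i',m,m') * log₂(P(i|m,m')/Q₁(i)) + Σ_{i,i',m,m'} P(i,i',m,m') * log₂(P(i'|i,m,m')/Q(i'|i)), i.e., the joint pragmatic information is the pragmatic information about the first outcome plus the conditional pragmatic information about the second outcome given the first. -/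
/-- **Chain rule for pragmatic information.** Let `P` be the strictly positive joint
law on outcomes `(i, i')` and messages `(m, m')`, and `Q` the strictly positive joint
prior on `(i, i')`.  Writing `φ(m,m') = ∑_{i,i'} P i i' m m'` for the message marginal,
the joint pragmatic information equals the pragmatic information about the first
outcome plus the conditional pragmatic information about the second outcome given
the first. -/
theorem pragmatic_info_chain_rule
    {I I' M M' : Type*} [Fintype I] [Fintype I'] [Fintype M] [Fintype M']
    [Nonempty I] [Nonempty I'] [Nonempty M] [Nonempty M']
    (P : I → I' → M → M' → ℝ) (Q : I → I' → ℝ)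
    (hP : ∀ i i' m m', 0 < P i i' m m')
    (hPsum : ∑ i, ∑ i', ∑ m, ∑ m', P i i' m m' = 1)
    (hQ : ∀ i i', 0 < Q i i')
    (hQsum : ∑ i, ∑ i', Q i i' = 1) :
    (∑ i, ∑ i', ∑ m, ∑ m', P i i' m m' *
        Real.logb 2 ((P i i' m m' / (∑ j, ∑ j', P j j' m m')) / Q i i')) =
    (∑ i, ∑ i', ∑ m, ∑ m', P i i' m m' *
        Real.logb 2 (((∑ j', P i j' m m') / (∑ j, ∑ j', P j j' m m')) / (∑ j', Q i j'))) +
    (∑ i, ∑ i', ∑ m, ∑ m', P i i' m m' *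
        Real.logb 2 (((P i i' m m' / (∑ j, ∑ j', P j j' m m')) /
            ((∑ j', P i j' m m') / (∑ j, ∑ j', P j j' m m'))) /
          (Q i i' / ∑ j', Q i j'))) := by
  rw [← Finset.sum_add_distrib]
  refine Finset.sum_congr rfl fun i _ => ?_
  rw [← Finset.sum_add_distrib]
  refine Finset.sum_congr rfl fun i' _ => ?_
  rw [← Finset.sum_add_distrib]
  refine Finset.sum_congr rfl fun m _ => ?_
  rw [← Finset.sum_add_distrib]
  refine Finset.sum_congr rfl fun m' _ => ?_
  have hφ : 0 < ∑ j, ∑ j', P j j' m m' :=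
    Finset.sum_pos (fun j _ => Finset.sum_pos (fun j' _ => hP j j' m m') Finset.univ_nonempty)
      Finset.univ_nonempty
  have hPi : 0 < ∑ j', P i j' m m' :=
    Finset.sum_pos (fun j' _ => hP i j' m m') Finset.univ_nonempty
  have hQi : 0 < ∑ j', Q i j' :=
    Finset.sum_pos (fun j' _ => hQ i j') Finset.univ_nonempty
  have hφ' := hφ.ne'
  have hPi' := hPi.ne'
  have hQi' := hQi.ne'
  have hQ' := (hQ i i').ne'
  have hB : (0:ℝ) < ((∑ j', P i j' m m') / (∑ j, ∑ j', P j j' m m')) / (∑ j', Q i j') :=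
    div_pos (div_pos hPi hφ) hQi
  have hC : (0:ℝ) < ((P i i' m m' / (∑ j, ∑ j', P j j' m m')) /
      ((∑ j', P i j' m m') / (∑ j, ∑ j', P j j' m m'))) / (Q i i' / ∑ j', Q i j') :=
    div_pos (div_pos (div_pos (hP i i' m m') hφ) (div_pos hPi hφ)) (div_pos (hQ i i') hQi)
  rw [← mul_add, ← Real.logb_mul hB.ne' hC.ne']
  congr 2
  field_simp
end

section
/- Pragmatic information dominates mutual information: let M and Ω be nonempty finite types, let P be a strictly positive probability vector on Ω × M with marginals p̄(i) = Σ_m P(i,m) and φ(m) = Σ_i P(i,m), and let q be a strictly positive probability vector on Ω. Then Φ = Σ_{i,m} P(i,m) * log₂(P(i|m)/q(i)) ≥ I(M;Ω) = Σ_{i,m} P(i,m) * log₂(P(i,m)/(p̄(i) φ(m))), with equality if and only if p̄ = q. -/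
/-- Gibbs' inequality (natural log version). -/
lemma gibbs_aux {Ω : Type*} [Fintype Ω]
    (p q : Ω → ℝ) (hp : ∀ i, 0 < p i) (hq : ∀ i, 0 < q i)
    (hpsum : ∑ i, p i = 1) (hqsum : ∑ i, q i = 1) :
    0 ≤ ∑ i, p i * Real.log (p i / q i) ∧
      ((∑ i, p i * Real.log (p i / q i)) = 0 ↔ p = q) := by
  have hterm : ∀ i, p i - q i ≤ p i * Real.log (p i / q i) := by
    intro i
    have h1 : Real.log (q i / p i) ≤ q i / p i - 1 :=
      Real.log_le_sub_one_of_pos (div_pos (hq i) (hp i))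
    have h2 : Real.log (p i / q i) = -Real.log (q i / p i) := by
      rw [← Real.log_inv]; congr 1; field_simp
    have hpi := hp i
    rw [h2]
    have := mul_le_mul_of_nonneg_left h1 (le_of_lt hpi)
    have h3 : p i * (q i / p i - 1) = q i - p i := by field_simp
    nlinarith
  have hsum : 0 ≤ ∑ i, p i * Real.log (p i / q i) := by
    have h := Finset.sum_le_sum (s := Finset.univ) (f := fun i => p i - q i)
      (g := fun i => p i * Real.log (p i / q i)) (fun i _ => hterm i)
    simpa [Finset.sum_sub_distrib, hpsum, hqsum] using h
  refine ⟨hsum, ?_, ?_⟩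
  · intro h0
    by_contra hne
    obtain ⟨i₀, hi₀⟩ := Function.ne_iff.mp hne
    have hstrict : p i₀ - q i₀ < p i₀ * Real.log (p i₀ / q i₀) := by
      have hx : (0:ℝ) < q i₀ / p i₀ := div_pos (hq i₀) (hp i₀)
      have hx1 : q i₀ / p i₀ ≠ 1 := by
        intro h
        rw [div_eq_one_iff_eq (hp i₀).ne'] at h
        exact hi₀ h.symm
      have h1 : Real.log (q i₀ / p i₀) < q i₀ / p i₀ - 1 :=
        Real.log_lt_sub_one_of_pos hx hx1
      have h2 : Real.log (p i₀ / q i₀) = -Real.log (q i₀ / p i₀) := by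
        rw [← Real.log_inv]; congr 1; field_simp
      have hpi := hp i₀
      rw [h2]
      have := mul_lt_mul_of_pos_left h1 hpi
      have h3 : p i₀ * (q i₀ / p i₀ - 1) = q i₀ - p i₀ := by field_simp
      nlinarith
    have hlt : ∑ i, (p i - q i) < ∑ i, p i * Real.log (p i / q i) :=
      Finset.sum_lt_sum (fun i _ => hterm i) ⟨i₀, Finset.mem_univ _, hstrict⟩
    rw [Finset.sum_sub_distrib, hpsum, hqsum, h0] at hlt
    linarith
  · intro h
    subst h
    simp [div_self (ne_of_gt (hp _))]

/-- **Pragmatic information dominates mutual information:** `Φ ≥ I(M;Ω)`, with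
equality if and only if the outcome marginal `p̄` of the joint law equals the
prior `q`. -/
theorem pragmatic_info_ge_mutual_info
    {Ω M : Type*} [Fintype Ω] [Fintype M] [Nonempty Ω] [Nonempty M]
    (P : Ω → M → ℝ)
    (hP : ∀ i m, 0 < P i m) (hPsum : ∑ i, ∑ m, P i m = 1)
    (q : Ω → ℝ) (hq : ∀ i, 0 < q i) (hqsum : ∑ i, q i = 1) :
    (∑ i, ∑ m, P i m *
        Real.logb 2 (P i m / ((∑ m', P i m') * (∑ j, P j m)))) ≤
      (∑ i, ∑ m, P i m * Real.logb 2 ((P i m / ∑ j, P j m) / q i)) ∧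
    ((∑ i, ∑ m, P i m * Real.logb 2 ((P i m / ∑ j, P j m) / q i)) =
        (∑ i, ∑ m, P i m *
          Real.logb 2 (P i m / ((∑ m', P i m') * (∑ j, P j m)))) ↔
      (fun i => ∑ m, P i m) = q) := by
  set pbar : Ω → ℝ := fun i => ∑ m, P i m with hpbar
  have hpbarpos : ∀ i, 0 < pbar i :=
    fun i => Finset.sum_pos (fun m _ => hP i m) Finset.univ_nonempty
  have hphipos : ∀ m : M, 0 < ∑ j, P j m :=
    fun m => Finset.sum_pos (fun j _ => hP j m) Finset.univ_nonempty
  have key : (∑ i, ∑ m, P i m * Real.logb 2 ((P i m / ∑ j, P j m) / q i))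
      - (∑ i, ∑ m, P i m *
          Real.logb 2 (P i m / ((∑ m', P i m') * (∑ j, P j m))))
      = ∑ i, pbar i * Real.logb 2 (pbar i / q i) := by
    rw [← Finset.sum_sub_distrib]
    refine Finset.sum_congr rfl (fun i _ => ?_)
    rw [← Finset.sum_sub_distrib]
    have : ∀ m : M, P i m * Real.logb 2 ((P i m / ∑ j, P j m) / q i)
        - P i m * Real.logb 2 (P i m / ((∑ m', P i m') * (∑ j, P j m)))
        = P i m * Real.logb 2 (pbar i / q i) := by
      intro m
      have h1 : (P i m / ∑ j, P j m) / q i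
          = (P i m / ((∑ m', P i m') * (∑ j, P j m))) * (pbar i / q i) := by
        have h0 : (∑ m' : M, P i m') ≠ 0 := (hpbarpos i).ne'
        simp only [hpbar]
        field_simp
      rw [h1, Real.logb_mul (div_pos (hP i m) (mul_pos (hpbarpos i) (hphipos m))).ne' (div_pos (hpbarpos i) (hq i)).ne']
      ring
    rw [Finset.sum_congr rfl (fun m _ => this m), ← Finset.sum_mul]
  have gibbs := gibbs_aux pbar q hpbarpos hq hPsum hqsum
  have hlog2 : (0:ℝ) < Real.log 2 := Real.log_pos (by norm_num)
  have hS : ∑ i, pbar i * Real.logb 2 (pbar i / q i)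
      = (∑ i, pbar i * Real.log (pbar i / q i)) / Real.log 2 := by
    rw [Finset.sum_div]
    refine Finset.sum_congr rfl (fun i _ => ?_)
    rw [Real.logb, mul_div_assoc]
  constructor
  · have : 0 ≤ ∑ i, pbar i * Real.logb 2 (pbar i / q i) := by
      rw [hS]; exact div_nonneg gibbs.1 hlog2.le
    linarith [key]
  · rw [← sub_eq_zero, key, hS, div_eq_zero_iff]
    constructor
    · rintro (h | h)
      · exact gibbs.2.mp h
      · exact absurd h hlog2.ne'
    · intro h
      exact Or.inl (gibbs.2.mpr h)
end

section
/- Vanishing pragmatic information per trial for the one-armed bandit: fix π ∈ [0,1] and let (w_T) be any sequence of natural numbers with 0 ≤ w_T ≤ T for each T. Define Φ(T) = π * { ((w_T+2)/(T+3)) * log₂( ((w_T+2)(T+2)) / ((T+3)(w_T+1)) ) + ((T-w_T+1)/(T+3)) * log₂( (T+2)/(T+3) ) } + (1-π) * { ((w_T+1)/(T+3)) * log₂( (T+2)/(T+3) ) + ((T-w_T+2)/(T+3)) * log₂( ((T-w_T+2)(T+2)) / ((T+3)(T-w_T+1)) ) }. Then Φ(T) → 0 as T → ∞. -/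
lemma bandit_aux (t v : ℝ) (hv : 0 ≤ v) (hvt : v ≤ t) :
    |(v + 2) / (t + 3) * Real.logb 2 ((v + 2) * (t + 2) / ((t + 3) * (v + 1))) +
      (t - v + 1) / (t + 3) * Real.logb 2 ((t + 2) / (t + 3))|
      ≤ 3 / ((t + 2) * Real.log 2) := by
  have hL : 0 < Real.log 2 := Real.log_pos (by norm_num)
  have ht0 : 0 ≤ t := le_trans hv hvt
  have ht3 : (0:ℝ) < t + 3 := by linarith
  have hv1 : (0:ℝ) < v + 1 := by linarith
  have ht2 : (0:ℝ) < t + 2 := by linarith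
  have hApos : 0 < (v + 2) * (t + 2) / ((t + 3) * (v + 1)) := by positivity
  have hA1 : 1 ≤ (v + 2) * (t + 2) / ((t + 3) * (v + 1)) := by
    rw [le_div_iff₀ (by positivity)]; nlinarith
  simp only [Real.logb]
  set X := Real.log ((v + 2) * (t + 2) / ((t + 3) * (v + 1))) with hX
  set Y := Real.log ((t + 2) / (t + 3)) with hY
  have hX0 : 0 ≤ X := Real.log_nonneg hA1
  have hXub : X ≤ (t - v + 1) / ((t + 3) * (v + 1)) := by
    have h := Real.log_le_sub_one_of_pos hApos
    have heq : (v + 2) * (t + 2) / ((t + 3) * (v + 1)) - 1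
        = (t - v + 1) / ((t + 3) * (v + 1)) := by
      field_simp; ring
    rw [heq] at h; exact h
  have hY0 : Y ≤ 0 := Real.log_nonpos (by positivity) (by
    rw [div_le_one ht3]; linarith)
  have hYlb : -(1 / (t + 2)) ≤ Y := by
    have h1 : Real.log ((t + 3) / (t + 2)) ≤ (t + 3) / (t + 2) - 1 :=
      Real.log_le_sub_one_of_pos (by positivity)
    have h2 : Real.log ((t + 3) / (t + 2)) = -Y := by
      rw [hY, ← Real.log_inv]; congr 1; field_simp
    have h3 : (t + 3) / (t + 2) - 1 = 1 / (t + 2) := by field_simp; ring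
    rw [h2, h3] at h1; linarith
  have key : |(v + 2) / (t + 3) * X + (t - v + 1) / (t + 3) * Y| ≤ 3 / (t + 2) := by
    have hc1 : 0 ≤ (v + 2) / (t + 3) := by positivity
    have hc2 : 0 ≤ (t - v + 1) / (t + 3) := by
      apply div_nonneg _ (le_of_lt ht3); linarith
    have hc2' : (t - v + 1) / (t + 3) ≤ 1 := by
      rw [div_le_one ht3]; linarith
    rw [abs_le]
    constructor
    · have h1 : 0 ≤ (v + 2) / (t + 3) * X := mul_nonneg hc1 hX0
      have h2 : (t - v + 1) / (t + 3) * (-(1 / (t + 2))) ≤ (t - v + 1) / (t + 3) * Y :=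
        mul_le_mul_of_nonneg_left hYlb hc2
      have h3 : -(1 / (t + 2)) ≤ (t - v + 1) / (t + 3) * (-(1 / (t + 2))) := by
        have : (t - v + 1) / (t + 3) * (1 / (t + 2)) ≤ 1 * (1 / (t + 2)) :=
          mul_le_mul_of_nonneg_right hc2' (by positivity)
        nlinarith
      have h5 : (1:ℝ) / (t + 2) ≤ 3 / (t + 2) := by gcongr <;> norm_num
      linarith
    · have h1 : (v + 2) / (t + 3) * X ≤ (v + 2) / (t + 3) * ((t - v + 1) / ((t + 3) * (v + 1))) :=
        mul_le_mul_of_nonneg_left hXub hc1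
      have h2 : (v + 2) / (t + 3) * ((t - v + 1) / ((t + 3) * (v + 1))) ≤ 2 / (t + 2) := by
        rw [div_mul_div_comm, div_le_div_iff₀ (by positivity) ht2]
        nlinarith [mul_nonneg hv (sub_nonneg.2 hvt), mul_nonneg hv hv,
          mul_nonneg (mul_nonneg hv hv) (sub_nonneg.2 hvt),
          mul_nonneg hv (mul_nonneg hv hv), sq_nonneg (t - v), sq_nonneg v,
          mul_nonneg (sub_nonneg.2 hvt) ht0]
      have h3 : (t - v + 1) / (t + 3) * Y ≤ 0 :=
        mul_nonpos_of_nonneg_of_nonpos hc2 hY0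
      have h5 : (2:ℝ) / (t + 2) ≤ 3 / (t + 2) := by gcongr <;> norm_num
      linarith
  have hform : (v + 2) / (t + 3) * (X / Real.log 2) + (t - v + 1) / (t + 3) * (Y / Real.log 2)
      = ((v + 2) / (t + 3) * X + (t - v + 1) / (t + 3) * Y) / Real.log 2 := by ring
  rw [hform, abs_div, abs_of_pos hL]
  have hr : 3 / ((t + 2) * Real.log 2) = (3 / (t + 2)) / Real.log 2 := by
    rw [div_div]
  rw [hr]
  exact div_le_div_of_nonneg_right key hL.le

/-- **Vanishing pragmatic information per trial for the one-armed bandit:** for a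
payout probability `π ∈ [0,1]` and any sequence of win counts `w T ≤ T`, the
pragmatic information conveyed by the outcome of the `(T+1)`-st play (with Laplace
Rule-of-Succession estimates) tends to `0` as `T → ∞`. -/
theorem bandit_pragmatic_info_tendsto_zero
    (π : ℝ) (hπ0 : 0 ≤ π) (hπ1 : π ≤ 1)
    (w : ℕ → ℕ) (hw : ∀ T, w T ≤ T) :
    Filter.Tendsto (fun T : ℕ =>
      let t : ℝ := (T : ℝ)
      let v : ℝ := (w T : ℝ)
      π * ((v + 2) / (t + 3) *
              Real.logb 2 ((v + 2) * (t + 2) / ((t + 3) * (v + 1))) +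
            (t - v + 1) / (t + 3) * Real.logb 2 ((t + 2) / (t + 3))) +
      (1 - π) * ((v + 1) / (t + 3) * Real.logb 2 ((t + 2) / (t + 3)) +
            (t - v + 2) / (t + 3) *
              Real.logb 2 ((t - v + 2) * (t + 2) / ((t + 3) * (t - v + 1)))))
      Filter.atTop (nhds 0) := by
  have hL : 0 < Real.log 2 := Real.log_pos (by norm_num)
  apply squeeze_zero_norm (a := fun T : ℕ => 3 / (((T : ℝ) + 2) * Real.log 2))
  · intro T
    dsimp only
    set t : ℝ := (T : ℝ) with ht
    set v : ℝ := (w T : ℝ) with hv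
    have hv0 : 0 ≤ v := by positivity
    have hvt : v ≤ t := by rw [ht, hv]; exact_mod_cast hw T
    have b1 := bandit_aux t v hv0 hvt
    have b2 := bandit_aux t (t - v) (by linarith) (by linarith)
    have hrw : t - (t - v) = v := by ring
    rw [hrw] at b2
    have hπ1' : 0 ≤ 1 - π := by linarith
    calc ‖π * ((v + 2) / (t + 3) * Real.logb 2 ((v + 2) * (t + 2) / ((t + 3) * (v + 1))) +
            (t - v + 1) / (t + 3) * Real.logb 2 ((t + 2) / (t + 3))) +
          (1 - π) * ((v + 1) / (t + 3) * Real.logb 2 ((t + 2) / (t + 3)) +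
            (t - v + 2) / (t + 3) *
              Real.logb 2 ((t - v + 2) * (t + 2) / ((t + 3) * (t - v + 1))))‖
        ≤ π * |(v + 2) / (t + 3) * Real.logb 2 ((v + 2) * (t + 2) / ((t + 3) * (v + 1))) +
            (t - v + 1) / (t + 3) * Real.logb 2 ((t + 2) / (t + 3))| +
          (1 - π) * |(v + 1) / (t + 3) * Real.logb 2 ((t + 2) / (t + 3)) +
            (t - v + 2) / (t + 3) *
              Real.logb 2 ((t - v + 2) * (t + 2) / ((t + 3) * (t - v + 1)))| := by
          rw [Real.norm_eq_abs]
          refine (abs_add_le _ _).trans ?_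
          rw [abs_mul, abs_mul, abs_of_nonneg hπ0, abs_of_nonneg hπ1']
      _ ≤ π * (3 / ((t + 2) * Real.log 2)) + (1 - π) * (3 / ((t + 2) * Real.log 2)) := by
          gcongr
          rw [add_comm]; exact b2
      _ = 3 / ((t + 2) * Real.log 2) := by ring
  · have h1 : Filter.Tendsto (fun T : ℕ => ((T : ℝ) + 2) * Real.log 2) Filter.atTop Filter.atTop := by
      apply Filter.Tendsto.atTop_mul_const hL
      exact Filter.tendsto_atTop_add_const_right _ _ tendsto_natCast_atTop_atTop
    exact Filter.Tendsto.div_atTop tendsto_const_nhds h1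
end
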